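/- Let K(s,t) := min(s,t) − st for s, t ∈ (0,1) (the Brownian bridge kernel). For every n ≥ 1, all pairwise distinct x₁, …, xₙ ∈ (0,1), and every t ∈ (0,1), one has ‖(K[x])^{-1} K_x(t)‖₁ ≤ 1; that is, K satisfies condition (A4). -/

import Mathlib

open Matrix

/-- The kernel matrix of the Brownian bridge kernel `K(s,t) = min(s,t) - st`. -/
noncomputable def bbMatrix {n : ℕ} (x : Fin n → ℝ) : Matrix (Fin n) (Fin n) ℝ :=
  Matrix.of fun j k => min (x k) (x j) - x k * x j

/-- The vector `K_x(t)` for the Brownian bridge kernel. -/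
noncomputable def bbVec {n : ℕ} (x : Fin n → ℝ) (t : ℝ) : Fin n → ℝ :=
  fun j => min t (x j) - t * x j

private lemma bb_inv_norm_aux {n : ℕ} (A : Matrix (Fin n) (Fin n) ℝ) (v c : Fin n → ℝ)
    (h : A *ᵥ c = v) (hc : ∑ j, |c j| ≤ 1) : ∑ j, |(A⁻¹ *ᵥ v) j| ≤ 1 := by
  by_cases hA : IsUnit A.det
  · rw [← h, Matrix.mulVec_mulVec, Matrix.nonsing_inv_mul A hA, Matrix.one_mulVec]
    exact hc
  · rw [Matrix.nonsing_inv_apply_not_isUnit A hA]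
    simp

private lemma sum_abs_single {n : ℕ} (a : Fin n) (r : ℝ) :
    ∑ j, |(Pi.single a r : Fin n → ℝ) j| = |r| := by
  have h : ∀ j, |(Pi.single a r : Fin n → ℝ) j| = (Pi.single a |r| : Fin n → ℝ) j := by
    intro j
    rcases eq_or_ne j a with rfl | hj
    · simp
    · simp [Pi.single_eq_of_ne hj]
  simp_rw [h]
  simp [Finset.sum_pi_single']

private lemma sum_abs_two {n : ℕ} {a b : Fin n} (hab : a ≠ b) (r s : ℝ) :
    ∑ j, |(Pi.single a r : Fin n → ℝ) j + (Pi.single b s : Fin n → ℝ) j| = |r| + |s| := by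
  have h : ∀ j, |(Pi.single a r : Fin n → ℝ) j + (Pi.single b s : Fin n → ℝ) j|
      = (Pi.single a |r| : Fin n → ℝ) j + (Pi.single b |s| : Fin n → ℝ) j := by
    intro j
    rcases eq_or_ne j a with rfl | hja
    · simp [Pi.single_eq_of_ne (Ne.symm hab), Pi.single_eq_of_ne hab]
    · rcases eq_or_ne j b with rfl | hjb
      · simp [Pi.single_eq_of_ne hja]
      · simp [Pi.single_eq_of_ne hja, Pi.single_eq_of_ne hjb]
  simp_rw [h]
  rw [Finset.sum_add_distrib]
  simp [Finset.sum_pi_single']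

theorem stmt_14 (n : ℕ) (hn : 1 ≤ n) (x : Fin n → ℝ)
    (hx : ∀ i, x i ∈ Set.Ioo (0 : ℝ) 1) (hinj : Function.Injective x)
    (t : ℝ) (ht : t ∈ Set.Ioo (0 : ℝ) 1) :
    ∑ j, |((bbMatrix x)⁻¹ *ᵥ bbVec x t) j| ≤ 1 := by
  obtain ⟨ht0, ht1⟩ := ht
  by_cases hEq : ∃ j, x j = t
  · -- t coincides with a node
    obtain ⟨j₀, hj₀⟩ := hEq
    refine bb_inv_norm_aux _ _ (Pi.single j₀ 1) ?_ ?_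
    · funext k
      simp only [Matrix.mulVec_single, Pi.smul_apply, Matrix.col_apply, MulOpposite.smul_eq_mul_unop, MulOpposite.unop_op, bbMatrix, bbVec, Matrix.of_apply, ← hj₀]
      ring_nf
    · rw [sum_abs_single]; norm_num
  · push_neg at hEq
    set S : Finset (Fin n) := Finset.univ.filter (fun j => x j < t) with hS
    set T : Finset (Fin n) := Finset.univ.filter (fun j => t < x j) with hT
    have hST : ∀ j, j ∈ S ∨ j ∈ T := by
      intro j
      rcases lt_trichotomy (x j) t with h | h | h
      · exact Or.inl (by simp [hS, h])
      · exact absurd h (hEq j)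
      · exact Or.inr (by simp [hT, h])
    by_cases hSne : S.Nonempty
    · by_cases hTne : T.Nonempty
      · -- t strictly between nodes: two-point interpolation
        obtain ⟨a, haS, hamax⟩ := Finset.exists_max_image S x hSne
        obtain ⟨b, hbT, hbmin⟩ := Finset.exists_min_image T x hTne
        have hat : x a < t := by simpa [hS] using haS
        have htb : t < x b := by simpa [hT] using hbT
        have hd : x b - x a > 0 := by linarith
        have hab : a ≠ b := fun h => by rw [h] at hat; linarith
        refine bb_inv_norm_aux _ _
          (Pi.single a ((x b - t) / (x b - x a)) + Pi.single b ((t - x a) / (x b - x a))) ?_ ?_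
        · funext k
          rw [Matrix.mulVec_add]
          simp only [Matrix.mulVec_single, Pi.smul_apply, Matrix.col_apply, MulOpposite.smul_eq_mul_unop, MulOpposite.unop_op, bbMatrix, bbVec, Matrix.of_apply, Pi.add_apply]
          rcases hST k with hk | hk
          · have hk' : x k < t := by simpa [hS] using hk
            have hka : x k ≤ x a := hamax k hk
            have hkb : x k ≤ x b := le_of_lt (lt_of_lt_of_le hk' (le_of_lt htb))
            rw [min_eq_right hka, min_eq_right hkb, min_eq_right (le_of_lt hk')]
            have hd' : x b - x a ≠ 0 := ne_of_gt hd
            field_simp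
            ring
          · have hk' : t < x k := by simpa [hT] using hk
            have hkb : x b ≤ x k := hbmin k hk
            have hka : x a ≤ x k := le_of_lt (lt_of_lt_of_le (lt_trans hat hk') le_rfl)
            rw [min_eq_left hka, min_eq_left hkb, min_eq_left (le_of_lt hk')]
            have hd' : x b - x a ≠ 0 := ne_of_gt hd
            field_simp
            ring
        · simp only [Pi.add_apply]
          rw [sum_abs_two hab]
          rw [abs_of_nonneg (div_nonneg (by linarith) (by linarith)), abs_of_nonneg (div_nonneg (by linarith) (by linarith))]
          rw [← add_div, div_le_one hd]
          linarith
      · -- t above all nodes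
        rw [Finset.not_nonempty_iff_eq_empty] at hTne
        have hall : ∀ j, x j < t := by
          intro j
          rcases hST j with h | h
          · simpa [hS] using h
          · rw [hTne] at h; exact absurd h (Finset.notMem_empty j)
        obtain ⟨b, _, hbmax⟩ := Finset.exists_max_image Finset.univ x
          ⟨⟨0, hn⟩, Finset.mem_univ _⟩
        have hb1 : x b < 1 := (hx b).2
        have hbt : x b < t := hall b
        refine bb_inv_norm_aux _ _ (Pi.single b ((1 - t) / (1 - x b))) ?_ ?_
        · funext k
          simp only [Matrix.mulVec_single, Pi.smul_apply, Matrix.col_apply, MulOpposite.smul_eq_mul_unop, MulOpposite.unop_op, bbMatrix, bbVec, Matrix.of_apply]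
          have hkb : x k ≤ x b := hbmax k (Finset.mem_univ k)
          rw [min_eq_right hkb, min_eq_right (le_of_lt (hall k))]
          have hb1' : 1 - x b ≠ 0 := by linarith
          field_simp
        · rw [sum_abs_single,
            abs_of_nonneg (div_nonneg (by linarith) (by linarith)), div_le_one (by linarith)]
          linarith
    · -- t below all nodes
      rw [Finset.not_nonempty_iff_eq_empty] at hSne
      have hall : ∀ j, t < x j := by
        intro j
        rcases hST j with h | h
        · rw [hSne] at h; exact absurd h (Finset.notMem_empty j)
        · simpa [hT] using h
      obtain ⟨a, _, hamin⟩ := Finset.exists_min_image Finset.univ x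
        ⟨⟨0, hn⟩, Finset.mem_univ _⟩
      have ha0 : 0 < x a := (hx a).1
      have hta : t < x a := hall a
      refine bb_inv_norm_aux _ _ (Pi.single a (t / x a)) ?_ ?_
      · funext k
        simp only [Matrix.mulVec_single, Pi.smul_apply, Matrix.col_apply, MulOpposite.smul_eq_mul_unop, MulOpposite.unop_op, bbMatrix, bbVec, Matrix.of_apply]
        have hak : x a ≤ x k := hamin k (Finset.mem_univ k)
        rw [min_eq_left hak, min_eq_left (le_of_lt (hall k))]
        have ha0' : x a ≠ 0 := ne_of_gt ha0
        field_simp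
      · rw [sum_abs_single, abs_of_nonneg (by positivity), div_le_one ha0]
        linarith
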